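/- For every binary word s and every t ≥ 0, the greedy buffer greedy_t(s) has at most two runs, i.e., greedy_t(s) ∈ Σ_2 = {0^a 1^b, 1^a 0^b : a, b ≥ 0}. Moreover |greedy_t(s)| ≡ t (mod 2). -/

import Mathlib

/-- One step of the greedy algorithm: shorten the buffer whenever possible. -/
def greedyStep (w : List Bool) (b : Bool) : List Bool :=
  if w.head? = some b then w.tail else w ++ [b]

/-- The greedy algorithm buffer `greedy(s)`. -/
def greedy (s : List Bool) : List Bool := s.foldl greedyStep []
/-- Binary words with at most two runs: `0^a 1^b` or `1^a 0^b`. -/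
def Sigma2 : Set (List Bool) :=
  {w | ∃ a b : ℕ, w = List.replicate a false ++ List.replicate b true ∨
      w = List.replicate a true ++ List.replicate b false}

lemma tail_mem_sigma2 {w : List Bool} (h : w ∈ Sigma2) : w.tail ∈ Sigma2 := by
  obtain ⟨a, b, h | h⟩ := h
  · subst h
    cases a with
    | zero =>
        cases b with
        | zero => exact ⟨0, 0, Or.inl (by simp)⟩
        | succ b => exact ⟨0, b, Or.inl (by simp [List.replicate_succ])⟩
    | succ a => exact ⟨a, b, Or.inl (by simp [List.replicate_succ])⟩
  · subst h
    cases a with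
    | zero =>
        cases b with
        | zero => exact ⟨0, 0, Or.inl (by simp)⟩
        | succ b => exact ⟨0, b, Or.inr (by simp [List.replicate_succ])⟩
    | succ a => exact ⟨a, b, Or.inr (by simp [List.replicate_succ])⟩

lemma append_mem_sigma2 {w : List Bool} {c : Bool} (h : w ∈ Sigma2)
    (hc : w.head? ≠ some c) : w ++ [c] ∈ Sigma2 := by
  obtain ⟨a, b, h | h⟩ := h <;> subst h <;> cases c
  · -- w = 0^a 1^b, append false
    cases a with
    | zero =>
        exact ⟨b, 1, Or.inr (by simp)⟩
    | succ a =>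
        exfalso; apply hc; simp [List.replicate_succ]
  · -- w = 0^a 1^b, append true
    exact ⟨a, b + 1, Or.inl (by rw [List.replicate_succ' (n := b)]; simp)⟩
  · -- w = 1^a 0^b, append false
    exact ⟨a, b + 1, Or.inr (by rw [List.replicate_succ' (n := b)]; simp)⟩
  · -- w = 1^a 0^b, append true
    cases a with
    | zero =>
        exact ⟨b, 1, Or.inl (by simp)⟩
    | succ a =>
        exfalso; apply hc; simp [List.replicate_succ]

lemma step_mem_sigma2 {w : List Bool} (h : w ∈ Sigma2) (c : Bool) :
    greedyStep w c ∈ Sigma2 := by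
  unfold greedyStep
  split
  · exact tail_mem_sigma2 h
  · exact append_mem_sigma2 h (by assumption)

lemma step_length {w : List Bool} (c : Bool) :
    (greedyStep w c).length % 2 = (w.length + 1) % 2 := by
  unfold greedyStep
  split
  · rename_i hh
    have hw : w ≠ [] := by rintro rfl; simp at hh
    have : 1 ≤ w.length := List.length_pos_iff.mpr hw
    simp only [List.length_tail]
    omega
  · simp

lemma greedy_append_singleton (u : List Bool) (b : Bool) :
    greedy (u ++ [b]) = greedyStep (greedy u) b := by
  simp [greedy, List.foldl_append]

/-- for every binary word `s` and every `t`, `greedy_t(s) ∈ Σ₂`,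
and `|greedy_t(s)| ≡ t (mod 2)`. -/
theorem greedy_mem_sigma2_and_parity (s : List Bool) (t : ℕ) (ht : t ≤ s.length) :
    greedy (s.take t) ∈ Sigma2 ∧ (greedy (s.take t)).length % 2 = t % 2 := by
  induction t with
  | zero => exact ⟨⟨0, 0, Or.inl (by simp [greedy])⟩, by simp [greedy]⟩
  | succ t ih =>
    have ht' : t < s.length := ht
    obtain ⟨ih1, ih2⟩ := ih (le_of_lt ht')
    have htake : s.take (t + 1) = s.take t ++ [s.get ⟨t, ht'⟩] := by
      rw [← List.take_concat_get ht']
      simp [List.concat_eq_append]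
    rw [htake, greedy_append_singleton]
    refine ⟨step_mem_sigma2 ih1 _, ?_⟩
    rw [step_length]
    omega
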